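/- Let f : (Fin n → Bool) → Bool be monotone (if x ≤ y pointwise then f(x) → f(y) for the order false < true), with f(all-true) = true and f(all-false) = false. If E is an explanation (an inclusion-minimal subset with f(indicator E) = true), then every pixel p ∈ E is a cause of the classification of the all-true image, with witness S = (Fin n) \ E, and hence r(p) ≥ 1/(n − |E| + 1). -/

import Mathlib

def mask {n : ℕ} (S : Finset (Fin n)) : Fin n → Bool := fun i => if i ∈ S then false else true

def allTrue {n : ℕ} : Fin n → Bool := fun _ => true

def IsWitness {n : ℕ} (f : (Fin n → Bool) → Bool) (i : Fin n) (S : Finset (Fin n)) : Prop :=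
  i ∉ S ∧ (∀ S' ⊆ S, f (mask S') = f allTrue) ∧ f (mask (insert i S)) ≠ f allTrue

def IsCause {n : ℕ} (f : (Fin n → Bool) → Bool) (i : Fin n) : Prop := ∃ S, IsWitness f i S

noncomputable def minWitness {n : ℕ} (f : (Fin n → Bool) → Bool) (i : Fin n) : ℕ :=
  sInf {m : ℕ | ∃ S, IsWitness f i S ∧ S.card = m}

open Classical in
noncomputable def resp {n : ℕ} (f : (Fin n → Bool) → Bool) (i : Fin n) : ℝ :=
  if IsCause f i then 1 / ((minWitness f i : ℝ) + 1) else 0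

def ind {n : ℕ} (E : Finset (Fin n)) : Fin n → Bool := fun i => if i ∈ E then true else false

def IsExplanation {n : ℕ} (f : (Fin n → Bool) → Bool) (E : Finset (Fin n)) : Prop :=
  f (ind E) = true ∧ ∀ E' ⊂ E, f (ind E') ≠ true

def MonotoneClassifier {n : ℕ} (f : (Fin n → Bool) → Bool) : Prop :=
  ∀ x y : Fin n → Bool, (∀ i, x i ≤ y i) → f x ≤ f y

theorem explanation_pixels_are_causes {n : ℕ} (f : (Fin n → Bool) → Bool)
    (hmono : MonotoneClassifier f) (h1 : f allTrue = true) (h0 : f (fun _ => false) = false)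
    (E : Finset (Fin n)) (hE : IsExplanation f E) (p : Fin n) (hp : p ∈ E) :
    IsWitness f p (Finset.univ \ E) ∧ IsCause f p ∧
      (1 : ℝ) / (n - E.card + 1) ≤ resp f p := by
  have hwit : IsWitness f p (Finset.univ \ E) := by
    refine ⟨by simp [hp], ?_, ?_⟩
    · intro S' hS'
      rw [h1]
      have hle : ∀ i, ind E i ≤ mask S' i := by
        intro i
        by_cases hi : i ∈ E
        · have : i ∉ S' := fun h => by
            have := hS' h; simp [Finset.mem_sdiff] at this; exact this hi
          simp [ind, mask, hi, this]
        · simp [ind, hi]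
      have := hmono _ _ hle
      rw [hE.1] at this
      exact le_antisymm (by simp) this
    · have heq : mask (insert p (Finset.univ \ E)) = ind (E.erase p) := by
        funext i
        by_cases hip : i = p
        · simp [mask, ind, hip]
        · by_cases hiE : i ∈ E <;> simp [mask, ind, hip, hiE]
      rw [heq, h1]
      exact hE.2 _ (Finset.erase_ssubset hp)
  have hcause : IsCause f p := ⟨_, hwit⟩
  refine ⟨hwit, hcause, ?_⟩
  rw [resp, if_pos hcause]
  have hmw : minWitness f p ≤ (Finset.univ \ E).card :=
    Nat.sInf_le ⟨_, hwit, rfl⟩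
  have hcard : ((Finset.univ \ E).card : ℝ) = n - E.card := by
    rw [Finset.card_univ_diff]
    have := Finset.card_le_univ E
    rw [Nat.cast_sub (by simpa using this)]; simp
  have h1' : (0:ℝ) < (minWitness f p : ℝ) + 1 := by positivity
  apply one_div_le_one_div_of_le h1'
  calc ((minWitness f p : ℝ) + 1) ≤ ((Finset.univ \ E).card : ℝ) + 1 := by
        exact_mod_cast add_le_add_left (Nat.cast_le.mpr hmw) 1
    _ = n - E.card + 1 := by rw [hcard]
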